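/- Let $\pi$ be an overpartition in $\overline{\mathcal{B}}(\alpha_1,\ldots,\alpha_\lambda;\eta,k,r)$, and for some $t \geq 1$ let $\{\pi_{c+l}\}_{0 \leq l \leq k-2}$ and $\{\pi_{d+l}\}_{0 \leq l \leq k-2}$ be any two $(k-1)$-bands of $\pi$ belonging to $[(t-1)\eta, (t+1)\eta]$ (not necessarily overlapping). Then the two bands have the same parity with respect to the congruence $[|\pi_i|/\eta] + \cdots + [|\pi_{i+k-2}|/\eta] \equiv r - 1 + \overline{V}_\pi(\pi_i) + \overline{O}_\pi(\pi_{i+k-2}) \pmod{2}$. -/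

import Mathlib

/-- A part of an overpartition: a size together with a flag telling
whether the part is overlined. -/
structure OPart where
  size : ℕ
  isOver : Bool
deriving DecidableEq

/-- The value of a part in the ordering `1̄ < 1 < 2̄ < 2 < ⋯`:
an overlined part of size `t` has value `2t - 1`, a non-overlined one `2t`. -/
def OPart.val (p : OPart) : ℕ := 2 * p.size - (if p.isOver then 1 else 0)

def dpart : OPart := ⟨0, false⟩

/-- value of the `i`-th part (0-based). -/
def pval (π : List OPart) (i : ℕ) : ℕ := (π.getD i dpart).val

def pover (π : List OPart) (i : ℕ) : Bool := (π.getD i dpart).isOver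

def psize (π : List OPart) (i : ℕ) : ℕ := (π.getD i dpart).size

/-- the weight `|π|`: the sum of the sizes of the parts. -/
def wt (π : List OPart) : ℕ := (π.map OPart.size).sum

/-- An overpartition: a sequence of positive parts, non-increasing in the
ordering `1̄ < 1 < 2̄ < 2 < ⋯`, in which each size is overlined at most once
(the overlined copy, being smallest among equal sizes, is the last occurrence). -/
def IsOverPartition (π : List OPart) : Prop :=
  List.Pairwise (fun p q : OPart => q.val ≤ p.val) π ∧
  (∀ p ∈ π, 0 < p.size) ∧
  (∀ t : ℕ, π.count (⟨t, true⟩ : OPart) ≤ 1)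

/-- `{π_{i+l}}_{0 ≤ l ≤ m-1}` is an `m`-band of `π`:
`π_i ≤ π_{i+m-1} + η`, with strict inequality if `π_i` is overlined. -/
def IsBand (η : ℕ) (π : List OPart) (m i : ℕ) : Prop :=
  i + m ≤ π.length ∧
  pval π i ≤ pval π (i + m - 1) + 2 * η ∧
  (pover π i = true → pval π i < pval π (i + m - 1) + 2 * η)

/-- `V̄_π(N)`: the number of overlined parts of value at most `N`
whose size is not divisible by `η`. -/
def Vbar (η : ℕ) (π : List OPart) (N : ℕ) : ℕ :=
  π.countP (fun p => p.isOver && decide (p.val ≤ N) && !(decide (p.size % η = 0)))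

/-- `Ō_π(N)`: the number of overlined parts of value at least `N`
whose size is divisible by `η`. -/
def Obar (η : ℕ) (π : List OPart) (N : ℕ) : ℕ :=
  π.countP (fun p => p.isOver && decide (N ≤ p.val) && decide (p.size % η = 0))

/-- `f_{≤η}(π)`: the number of parts not exceeding `η`. -/
def fLe (η : ℕ) (π : List OPart) : ℕ :=
  π.countP (fun p => decide (p.val ≤ 2 * η))

/-- `[|π_i|/η] + ⋯ + [|π_{i+m-1}|/η]`. -/
def bandSum (η : ℕ) (π : List OPart) (i m : ℕ) : ℕ :=
  ∑ l ∈ Finset.range m, psize π (i + l) / η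

/-- Every part is congruent to `0, α_1, …, α_λ` modulo `η`. -/
def CongParts (α : ℕ → ℕ) (lam η : ℕ) (π : List OPart) : Prop :=
  ∀ p ∈ π, p.size % η = 0 ∨ ∃ s, 1 ≤ s ∧ s ≤ lam ∧ p.size % η = α s

/-- The class `B̄(α_1,…,α_λ; η, k, r)`: conditions (1)–(4) of the definition
of `B̄₀`. -/
def InBbar (α : ℕ → ℕ) (lam η k r : ℕ) (π : List OPart) : Prop :=
  IsOverPartition π ∧
  CongParts α lam η π ∧
  (∀ p ∈ π, p.isOver = false → η ∣ p.size) ∧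
  (∀ i, i + k ≤ π.length →
    pval π (i + k - 1) + 2 * η ≤ pval π i ∧
    (pover π i = false → pval π (i + k - 1) + 2 * η < pval π i)) ∧
  fLe η π ≤ r

/-- An `m`-band at `i` is even:
`[|π_i|/η]+⋯+[|π_{i+m-1}|/η] ≡ r - 1 + V̄_π(π_i) + Ō_π(π_{i+m-1}) (mod 2)`. -/
def EvenBand (η r : ℕ) (π : List OPart) (m i : ℕ) : Prop :=
  Int.ModEq 2 (bandSum η π i m)
    ((r : ℤ) - 1 + (Vbar η π (pval π i) : ℤ) + (Obar η π (pval π (i + m - 1)) : ℤ))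

/-- Condition (5) of the definition of `B̄₀`. -/
def Cond5 (η k r : ℕ) (π : List OPart) : Prop :=
  fLe η π = r → (⟨η, true⟩ : OPart) ∉ π →
    ∃ i, IsBand η π (k - 1) i ∧ pval π i < 2 * (2 * η) - 1

/-- The class `B̄₀(α_1,…,α_λ; η, k, r)`: conditions (1)–(6). -/
def InB0 (α : ℕ → ℕ) (lam η k r : ℕ) (π : List OPart) : Prop :=
  InBbar α lam η k r π ∧ Cond5 η k r π ∧
  ∀ i, IsBand η π (k - 1) i → EvenBand η r π (k - 1) i

/-- `s(π) > t̄η`: every overlined part divisible by `η` has size `> tη`. -/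
def SGt (η t : ℕ) (π : List OPart) : Prop :=
  ∀ p ∈ π, p.isOver = true → η ∣ p.size → t * η < p.size

/-- `s(π) = t̄η`. -/
def SEq (η t : ℕ) (π : List OPart) : Prop :=
  (⟨t * η, true⟩ : OPart) ∈ π ∧
  ∀ p ∈ π, p.isOver = true → η ∣ p.size → t * η ≤ p.size

/-- `g(π) ≥ x` (value `x`): every part starting a `(k-1)`-band has value `≥ x`. -/
def GGe (η k : ℕ) (π : List OPart) (x : ℕ) : Prop :=
  ∀ i, IsBand η π (k - 1) i → x ≤ pval π i

/-- `g(π) < x`: some part starting a `(k-1)`-band has value `< x`. -/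
def GLt (η k : ℕ) (π : List OPart) (x : ℕ) : Prop :=
  ∃ i, IsBand η π (k - 1) i ∧ pval π i < x

/-- `π ∈ B̄₀^=(α_1,…,α_λ; η,k,r | t)`. -/
def InBeq (α : ℕ → ℕ) (lam η k r t : ℕ) (π : List OPart) : Prop :=
  InB0 α lam η k r π ∧
  ((SEq η t π ∧ GGe η k π (2 * (t * η) - 1)) ∨
   (SGt η t π ∧ GGe η k π (2 * (t * η)) ∧ GLt η k π (2 * ((t + 1) * η) - 1)))

/-- `π ∈ B̄₀^>(α_1,…,α_λ; η,k,r | t)`. -/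
def InBgt (α : ℕ → ℕ) (lam η k r t : ℕ) (π : List OPart) : Prop :=
  InB0 α lam η k r π ∧ SGt η t π ∧ GGe η k π (2 * ((t + 1) * η) - 1)

/-- An `m`-band belonging to the closed interval `[(t-1)η, (t+1)η]`. -/
def BandInC (η t : ℕ) (π : List OPart) (m i : ℕ) : Prop :=
  IsBand η π m i ∧ 2 * ((t - 1) * η) ≤ pval π (i + m - 1) ∧
  pval π i ≤ 2 * ((t + 1) * η)

/-- An `m`-band belonging to `[(t-1)η, \overline{(t+1)η})`. -/
def BandInO (η t : ℕ) (π : List OPart) (m i : ℕ) : Prop :=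
  IsBand η π m i ∧ 2 * ((t - 1) * η) ≤ pval π (i + m - 1) ∧
  pval π i < 2 * ((t + 1) * η) - 1

/-- An `m`-band at `i` is of type N. -/
def TypeN (η r t : ℕ) (π : List OPart) (m i : ℕ) : Prop :=
  Int.ModEq 2 (bandSum η π i m)
    ((t : ℤ) + (r : ℤ) - 1 + (Vbar η π (pval π i) : ℤ) +
      (Obar η π (pval π (i + m - 1)) : ℤ))

/-- `π` is obtained from `μ` by inserting the part `p`. -/
def InsertPart (μ : List OPart) (p : OPart) (π : List OPart) : Prop :=
  ∃ l1 l2, μ = l1 ++ l2 ∧ π = l1 ++ p :: l2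

/-- The `(k-1)`-reduction `D_t` as a relation: `μ = D_t(π)`. -/
def DtRel (η t : ℕ) (π μ : List OPart) : Prop :=
  ((⟨t * η, true⟩ : OPart) ∈ π ∧ InsertPart μ ⟨t * η, true⟩ π) ∨
  ((⟨t * η, true⟩ : OPart) ∉ π ∧ InsertPart μ ⟨t * η, false⟩ π)

/-- `μ` has a `(k-2)`-band belonging to `[(t-1)η, \overline{(t+1)η})` of type N. -/
def HasTypeNBand (η r k t : ℕ) (μ : List OPart) : Prop :=
  ∃ i, BandInO η t μ (k - 2) i ∧ TypeN η r t μ (k - 2) i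

/-- The `(k-1)`-augmentation `C_t` as a relation: `π = C_t(μ)`. -/
def CtRel (η r k t : ℕ) (μ π : List OPart) : Prop :=
  (HasTypeNBand η r k t μ ∧ InsertPart μ ⟨t * η, false⟩ π) ∨
  (¬ HasTypeNBand η r k t μ ∧ InsertPart μ ⟨t * η, true⟩ π)

/-- `B₁`-type overpartitions: conditions (1)–(4), no overlined part divisible
by `η`, and at most `r - 1` parts not exceeding `η`. -/
def InB1over (α : ℕ → ℕ) (lam η k r : ℕ) (π : List OPart) : Prop :=
  InBbar α lam η k r π ∧ (∀ p ∈ π, p.isOver = true → ¬ η ∣ p.size) ∧ fLe η π < r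

/-- `D_η`: partitions into distinct parts divisible by `η`. -/
def InD (η : ℕ) (τ : List ℕ) : Prop :=
  List.Pairwise (· > ·) τ ∧ ∀ x ∈ τ, 0 < x ∧ η ∣ x

/-- Bressoud's class `B₁(α_1,…,α_λ; η,k,r)` of ordinary partitions. -/
def InB1nat (α : ℕ → ℕ) (lam η k r : ℕ) (σ : List ℕ) : Prop :=
  List.Pairwise (· ≥ ·) σ ∧ (∀ x ∈ σ, 0 < x) ∧
  (∀ x ∈ σ, x % η = 0 ∨ ∃ s, 1 ≤ s ∧ s ≤ lam ∧ x % η = α s) ∧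
  (∀ x : ℕ, ¬ η ∣ x → σ.count x ≤ 1) ∧
  (∀ i, i + k ≤ σ.length →
    σ.getD (i + k - 1) 0 + η ≤ σ.getD i 0 ∧
    (η ∣ σ.getD i 0 → σ.getD (i + k - 1) 0 + η < σ.getD i 0)) ∧
  σ.countP (fun x => decide (x ≤ η)) < r

/-- The class `Ā₀(α_1,…,α_λ; η,k,r)`. Congruence conditions involving `η/2`
are stated with sizes doubled. -/
def InA0 (α : ℕ → ℕ) (lam η k r : ℕ) (π : List OPart) : Prop :=
  IsOverPartition π ∧
  CongParts α lam η π ∧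
  (Even lam →
    ∀ p ∈ π, p.isOver = false →
      η ∣ p.size ∧
      ¬ (2 * η * (2 * k - lam - 1) ∣ 2 * p.size) ∧
      2 * p.size % (2 * η * (2 * k - lam - 1)) ≠ η * (2 * r - lam) ∧
      2 * p.size % (2 * η * (2 * k - lam - 1)) ≠
        2 * η * (2 * k - lam - 1) - η * (2 * r - lam)) ∧
  (¬ Even lam →
    (∀ p ∈ π, p.isOver = false →
      η ∣ 2 * p.size ∧
      p.size % (2 * η) ≠ η ∧
      ¬ (2 * η * (2 * k - lam - 1) ∣ 2 * p.size) ∧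
      2 * p.size % (2 * η * (2 * k - lam - 1)) ≠ η * (2 * r - lam) ∧
      2 * p.size % (2 * η * (2 * k - lam - 1)) ≠
        2 * η * (2 * k - lam - 1) - η * (2 * r - lam)) ∧
    (∀ p ∈ π, p.isOver = true → 2 * p.size % (2 * η) ≠ η))

section Stmt5Aux

lemma aux_countP_eq_sum_range (l : List OPart) (p : OPart → Bool) :
    l.countP p = ∑ j ∈ Finset.range l.length, (if p (l.getD j dpart) = true then 1 else 0) := by
  induction l with
  | nil => simp
  | cons a l ih =>
    rw [List.countP_cons, List.length_cons, Finset.sum_range_succ']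
    simp only [List.getD_cons_succ, List.getD_cons_zero]
    rw [← ih]

lemma aux_countP_split (l : List OPart) (p q : OPart → Bool)
    (h : ∀ x ∈ l, q x = true → p x = true) :
    l.countP p = l.countP q + l.countP (fun x => p x && !q x) := by
  induction l with
  | nil => simp
  | cons a l ih =>
    rw [List.countP_cons, List.countP_cons, List.countP_cons,
      ih (fun x hx => h x (List.mem_cons_of_mem a hx))]
    by_cases hqa : q a = true
    · have hpa := h a (List.mem_cons_self) hqa
      simp [hpa, hqa] <;> omega
    · have hqa' : q a = false := by simpa using hqa
      cases hpa : p a <;> simp [hpa, hqa'] <;> omega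

lemma aux_two_le_count (l : List OPart) (i j : ℕ) (hij : i < j) (hj : j < l.length)
    (hx : l[i]'(by omega) = l[j]) : 2 ≤ l.count l[j] := by
  have e := List.take_append_drop j l
  have m1 : l[j] ∈ l.take j := by
    have h1 : (l.take j)[i]'(by simp [List.length_take]; omega) = l[i]'(by omega) :=
      List.getElem_take
    rw [← hx, ← h1]; exact List.getElem_mem _
  have m2 : l[j] ∈ l.drop j := by
    have h2 : (l.drop j)[0]'(by simp [List.length_drop]; omega) = l[j+0]'(by omega) :=
      List.getElem_drop
    simp only [Nat.add_zero] at h2; rw [← h2]; exact List.getElem_mem _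
  have := List.count_pos_iff.mpr m1
  have := List.count_pos_iff.mpr m2
  calc 2 ≤ (l.take j).count l[j] + (l.drop j).count l[j] := by omega
  _ = ((l.take j) ++ (l.drop j)).count l[j] := List.count_append.symm
  _ = l.count l[j] := by rw [e]

lemma aux_getD_mem (π : List OPart) (j : ℕ) (hj : j < π.length) : π.getD j dpart ∈ π := by
  rw [List.getD_eq_getElem π dpart hj]; exact List.getElem_mem _

lemma aux_pval_anti (π : List OPart)
    (hs : List.Pairwise (fun p q : OPart => q.val ≤ p.val) π)
    {i j : ℕ} (hij : i ≤ j) : pval π j ≤ pval π i := by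
  rcases eq_or_lt_of_le hij with rfl | hlt
  · exact le_rfl
  by_cases hj : j < π.length
  · unfold pval
    rw [List.getD_eq_getElem π dpart hj, List.getD_eq_getElem π dpart (by omega)]
    exact List.pairwise_iff_getElem.mp hs i j (by omega) hj hlt
  · unfold pval
    rw [List.getD_eq_default π dpart (by omega)]
    simp [dpart, OPart.val]

lemma aux_pval_parity (π : List OPart) (hpos : ∀ p ∈ π, 0 < p.size) (j : ℕ)
    (hj : j < π.length) :
    pval π j % 2 = (if pover π j = true then 1 else 0) := by
  unfold pval pover
  rw [List.getD_eq_getElem π dpart hj]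
  have h0 : 0 < π[j].size := hpos _ (List.getElem_mem _)
  unfold OPart.val
  cases π[j].isOver <;> simp <;> omega

lemma aux_tie (π : List OPart) (hop : IsOverPartition π) {i j : ℕ}
    (hi : i < π.length) (hj : j < π.length) (hij : i ≠ j)
    (hoj : pover π j = true) (hv : pval π i = pval π j) : False := by
  obtain ⟨hs, hpos, hcnt⟩ := hop
  have hoi : pover π i = true := by
    have p1 := aux_pval_parity π hpos i hi
    have p2 := aux_pval_parity π hpos j hj
    rw [hv, p2, if_pos hoj] at p1
    by_contra hcon
    rw [if_neg hcon] at p1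
    omega
  have hoi' : π[i].isOver = true := by
    unfold pover at hoi; rwa [List.getD_eq_getElem π dpart hi] at hoi
  have hoj' : π[j].isOver = true := by
    unfold pover at hoj; rwa [List.getD_eq_getElem π dpart hj] at hoj
  have hvi : pval π i = 2 * π[i].size - 1 := by
    unfold pval; rw [List.getD_eq_getElem π dpart hi]; unfold OPart.val; rw [hoi']; simp
  have hvj : pval π j = 2 * π[j].size - 1 := by
    unfold pval; rw [List.getD_eq_getElem π dpart hj]; unfold OPart.val; rw [hoj']; simp
  have hposi : 0 < π[i].size := hpos _ (List.getElem_mem _)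
  have hposj : 0 < π[j].size := hpos _ (List.getElem_mem _)
  have hsz : π[i].size = π[j].size := by omega
  have hel : π[i] = π[j] := by
    have h2 : π[i].isOver = π[j].isOver := by rw [hoi', hoj']
    cases hA : π[i]; cases hB : π[j]; rw [hA, hB] at hsz h2; simp_all
  have hform : π[j] = (⟨π[j].size, true⟩ : OPart) := by
    cases hB : π[j]; rw [hB] at hoj'; simp_all
  have h1 := hcnt π[j].size
  rw [← hform] at h1
  rcases Nat.lt_or_ge i j with hlt | hge
  · have h2 := aux_two_le_count π i j hlt hj hel
    omega
  · have hlt : j < i := by omega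
    have h2 := aux_two_le_count π j i hlt hi hel.symm
    rw [hel] at h2
    omega

lemma aux_mult_eq (η u x : ℕ) (hη : 0 < η) (hdvd : x % η = 0) (h1 : u * η < x)
    (h2 : x ≤ u * η + η) : x = u * η + η := by
  have r1 : (u + 1) * η = u * η + η := by ring
  rcases Nat.lt_or_ge x ((u + 1) * η) with h | h
  · exfalso
    have hdiv : x / η = u := Nat.div_eq_of_lt_le (Nat.le_of_lt h1) h
    have hc : η * (x / η) = x := Nat.mul_div_cancel' (Nat.dvd_of_mod_eq_zero hdvd)
    rw [hdiv, mul_comm] at hc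
    omega
  · omega

lemma aux_div_eq (η u x : ℕ) (h1 : u * η ≤ x) (h2 : x < u * η + η) : x / η = u := by
  have r1 : (u + 1) * η = u * η + η := by ring
  exact Nat.div_eq_of_lt_le h1 (by omega)

lemma aux_A1 (η u a : ℕ) (hη : 0 < η) (hd : a % η = 0) (h1 : u * η + η < a)
    (h2 : a ≤ u * η + 2 * η) : a / η = u + 2 := by
  have r1 : (u + 1) * η = u * η + η := by ring
  have h3 : a = u * η + 2 * η := by
    have := aux_mult_eq η (u + 1) a hη hd (by omega) (by omega)
    omega
  rw [h3, show u * η + 2 * η = (u + 2) * η by ring, Nat.mul_div_cancel _ hη]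

lemma aux_A2 (η u a : ℕ) (hd : ¬ a % η = 0) (h1 : u * η + η ≤ a)
    (h2 : a ≤ u * η + 2 * η) : a / η = u + 1 := by
  have r1 : (u + 1) * η = u * η + η := by ring
  have hz : (u * η + 2 * η) % η = 0 := by
    rw [show u * η + 2 * η = (u + 2) * η by ring]; exact Nat.mul_mod_left _ _
  have hlt : a < u * η + 2 * η := by
    rcases Nat.lt_or_ge a (u * η + 2 * η) with h | h
    · exact h
    · exact absurd (by omega : a = u * η + 2 * η) (fun he => hd (he ▸ hz))
  have := aux_div_eq η (u + 1) a (by omega) (by omega)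
  omega

lemma aux_B1 (η u b : ℕ) (hη : 0 < η) (hd : b % η = 0) (h1 : u * η < b)
    (h2 : b ≤ u * η + η) : b / η = u + 1 := by
  have h3 : b = u * η + η := aux_mult_eq η u b hη hd h1 h2
  rw [h3, show u * η + η = (u + 1) * η by ring, Nat.mul_div_cancel _ hη]

lemma aux_B2 (η u b : ℕ) (hd : ¬ b % η = 0) (h1 : u * η ≤ b)
    (h2 : b ≤ u * η + η) : b / η = u := by
  have hz : (u * η + η) % η = 0 := by
    rw [show u * η + η = (u + 1) * η by ring]; exact Nat.mul_mod_left _ _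
  have hlt : b < u * η + η := by
    rcases Nat.lt_or_ge b (u * η + η) with h | h
    · exact h
    · exact absurd (by omega : b = u * η + η) (fun he => hd (he ▸ hz))
  exact aux_div_eq η u b h1 hlt

lemma aux_pair (η u a b : ℕ) (oa ob : Bool) (hη : 0 < η)
    (ha0 : 0 < a) (hb0 : 0 < b)
    (hda : oa = false → a % η = 0) (hdb : ob = false → b % η = 0)
    (hbw : 2 * (u * η) ≤ 2 * b - (if ob then 1 else 0))
    (haw : 2 * a - (if oa then 1 else 0) ≤ 2 * ((u + 2) * η))
    (hgap : (2 * b - (if ob then 1 else 0)) + 2 * η ≤ 2 * a - (if oa then 1 else 0))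
    (hgaps : oa = false → (2 * b - (if ob then 1 else 0)) + 2 * η < 2 * a - (if oa then 1 else 0)) :
    (a / η + b / η + (if oa = true ∧ ¬ a % η = 0 then 1 else 0)
      + (if ob = true ∧ b % η = 0 then 1 else 0)) % 2 = 0 := by
  have r2 : 2 * ((u + 2) * η) = 2 * (u * η) + 4 * η := by ring
  rw [r2] at haw
  have hz : (u * η + η) % η = 0 := by
    rw [show u * η + η = (u + 1) * η by ring]; exact Nat.mul_mod_left _ _
  cases oa with
  | false =>
    have hda' := hda rfl
    have hgaps' := hgaps rfl
    have hita : (if (false : Bool) then (1:ℕ) else 0) = 0 := rfl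
    rw [hita] at haw hgap hgaps'
    rw [if_neg (by simp : ¬ ((false : Bool) = true ∧ ¬ a % η = 0))]
    cases ob with
    | false =>
      have hdb' := hdb rfl
      have hitb : (if (false : Bool) then (1:ℕ) else 0) = 0 := rfl
      rw [hitb] at hbw hgaps'
      rw [if_neg (by simp : ¬ ((false : Bool) = true ∧ b % η = 0))]
      -- a: uη + η < a (2b+2η ≥ 2uη+2η, < 2a), a ≤ uη + 2η
      have hA : a / η = u + 2 := aux_A1 η u a hη hda' (by omega) (by omega)
      -- b: uη ≤ b ≤ uη + η, exclude b = uη + η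
      have hbne : b ≠ u * η + η := by
        intro he
        omega
      have hB : b / η = u := aux_div_eq η u b (by omega) (by omega)
      omega
    | true =>
      have hitb : (if (true : Bool) then (1:ℕ) else 0) = 1 := rfl
      rw [hitb] at hbw hgaps'
      have hA : a / η = u + 2 := aux_A1 η u a hη hda' (by omega) (by omega)
      by_cases hd2 : b % η = 0
      · rw [if_pos ⟨rfl, hd2⟩]
        have hB : b / η = u + 1 := aux_B1 η u b hη hd2 (by omega) (by omega)
        omega
      · rw [if_neg (by simp [hd2])]
        have hB : b / η = u := aux_B2 η u b hd2 (by omega) (by omega)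
        omega
  | true =>
    have hita : (if (true : Bool) then (1:ℕ) else 0) = 1 := rfl
    rw [hita] at haw hgap
    have haub : a ≤ u * η + 2 * η := by omega
    cases ob with
    | false =>
      have hdb' := hdb rfl
      have hitb : (if (false : Bool) then (1:ℕ) else 0) = 0 := rfl
      rw [hitb] at hbw hgap
      rw [if_neg (by simp : ¬ ((false : Bool) = true ∧ b % η = 0))]
      have hbne : b ≠ u * η + η := by
        intro he
        omega
      have hB : b / η = u := aux_div_eq η u b (by omega) (by omega)
      by_cases hd2 : a % η = 0
      · rw [if_neg (by simp [hd2])]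
        have hA : a / η = u + 2 := aux_A1 η u a hη hd2 (by omega) (by omega)
        omega
      · rw [if_pos ⟨rfl, hd2⟩]
        have hA : a / η = u + 1 := aux_A2 η u a hd2 (by omega) (by omega)
        omega
    | true =>
      have hitb : (if (true : Bool) then (1:ℕ) else 0) = 1 := rfl
      rw [hitb] at hbw hgap
      by_cases hd2 : a % η = 0
      · rw [if_neg (by simp [hd2])]
        have hA : a / η = u + 2 := aux_A1 η u a hη hd2 (by omega) (by omega)
        by_cases hd3 : b % η = 0
        · rw [if_pos ⟨rfl, hd3⟩]
          have hB : b / η = u + 1 := aux_B1 η u b hη hd3 (by omega) (by omega)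
          omega
        · rw [if_neg (by simp [hd3])]
          have hB : b / η = u := aux_B2 η u b hd3 (by omega) (by omega)
          omega
      · rw [if_pos ⟨rfl, hd2⟩]
        have hA : a / η = u + 1 := aux_A2 η u a hd2 (by omega) (by omega)
        by_cases hd3 : b % η = 0
        · rw [if_pos ⟨rfl, hd3⟩]
          have hB : b / η = u + 1 := aux_B1 η u b hη hd3 (by omega) (by omega)
          omega
        · rw [if_neg (by simp [hd3])]
          have hB : b / η = u := aux_B2 η u b hd3 (by omega) (by omega)
          omega

lemma aux_key (η k r : ℕ) (π : List OPart) (hop : IsOverPartition π)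
    (hdvd : ∀ p ∈ π, p.isOver = false → η ∣ p.size)
    (hgap : ∀ i, i + k ≤ π.length →
      pval π (i + k - 1) + 2 * η ≤ pval π i ∧
      (pover π i = false → pval π (i + k - 1) + 2 * η < pval π i))
    (hη : 0 < η) (hk : 2 ≤ k) (t : ℕ) (ht : 1 ≤ t) (c d : ℕ) (hcd : c ≤ d)
    (hc : BandInC η t π (k - 1) c) (hd : BandInC η t π (k - 1) d) :
    ((bandSum η π c (k - 1) : ℤ) - (Vbar η π (pval π c) : ℤ)
        - (Obar η π (pval π (c + (k - 1) - 1)) : ℤ)) % 2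
      = ((bandSum η π d (k - 1) : ℤ) - (Vbar η π (pval π d) : ℤ)
        - (Obar η π (pval π (d + (k - 1) - 1)) : ℤ)) % 2 := by
  set m := k - 1 with hm
  have hm1 : 1 ≤ m := by omega
  have hlc : c + m ≤ π.length := hc.1.1
  have hld : d + m ≤ π.length := hd.1.1
  have hanti : ∀ i j : ℕ, i ≤ j → pval π j ≤ pval π i :=
    fun i j h => aux_pval_anti π hop.1 h
  have hszpos : ∀ j, j < π.length → 0 < psize π j := by
    intro j hj
    unfold psize
    rw [List.getD_eq_getElem π dpart hj]
    exact hop.2.1 _ (List.getElem_mem _)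
  have hwc : pval π c ≤ 2 * ((t + 1) * η) := hc.2.2
  have hwd : 2 * ((t - 1) * η) ≤ pval π (d + m - 1) := hd.2.1
  -- Step (i) : telescoping of the band sums
  have hband_sum : ∀ i : ℕ, bandSum η π i m = ∑ j ∈ Finset.Ico i (i + m), psize π j / η := by
    intro i
    rw [Finset.sum_Ico_eq_sum_range]
    have h2 : i + m - i = m := by omega
    rw [h2]
    rfl
  have E1 : bandSum η π c m + ∑ j ∈ Finset.Ico (c + m) (d + m), psize π j / η
      = bandSum η π d m + ∑ j ∈ Finset.Ico c d, psize π j / η := by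
    rw [hband_sum, hband_sum]
    rw [Finset.sum_Ico_consecutive (fun j => psize π j / η) (by omega : c ≤ c + m)
      (by omega : c + m ≤ d + m)]
    rw [← Finset.sum_Ico_consecutive (fun j => psize π j / η) (hcd : c ≤ d)
      (by omega : d ≤ d + m)]
    omega
  -- Step (ii) : Vbar difference
  have E2 : Vbar η π (pval π c) = Vbar η π (pval π d)
      + ∑ j ∈ Finset.Ico c d, (if pover π j = true ∧ ¬ psize π j % η = 0 then 1 else 0) := by
    unfold Vbar
    rw [aux_countP_split π
        (fun p => p.isOver && decide (p.val ≤ pval π c) && !decide (p.size % η = 0))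
        (fun p => p.isOver && decide (p.val ≤ pval π d) && !decide (p.size % η = 0))
        (by
          intro x hx hq
          simp only [Bool.and_eq_true, decide_eq_true_eq] at hq ⊢
          exact ⟨⟨hq.1.1, le_trans hq.1.2 (hanti c d hcd)⟩, hq.2⟩)]
    congr 1
    rw [aux_countP_eq_sum_range]
    rw [← Finset.sum_subset (show Finset.Ico c d ⊆ Finset.range π.length by
        intro x hx
        simp only [Finset.mem_Ico] at hx
        simp only [Finset.mem_range]
        omega) ?_]
    · apply Finset.sum_congr rfl
      intro j hj
      simp only [Finset.mem_Ico] at hj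
      have hjlen : j < π.length := by omega
      have hxv : (π.getD j dpart).val = pval π j := rfl
      have hxo : (π.getD j dpart).isOver = pover π j := rfl
      have hxs : (π.getD j dpart).size = psize π j := rfl
      by_cases h1 : pover π j = true
      · by_cases h3 : psize π j % η = 0
        · simp only [hxv, hxo, hxs]
          simp [h1, h3]
        · have hle1 : pval π j ≤ pval π c := hanti c j hj.1
          have hnle : ¬ pval π j ≤ pval π d := by
            intro hle
            have h4 : pval π d ≤ pval π j := hanti j d (le_of_lt hj.2)
            exact aux_tie π hop (by omega : d < π.length) hjlen (by omega : d ≠ j) h1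
              (by omega : pval π d = pval π j)
          simp only [hxv, hxo, hxs]
          simp [h1, h3, hle1, hnle]
      · have h1' : pover π j = false := by simpa using h1
        simp only [hxv, hxo, hxs]
        simp [h1']
    · intro j hjr hjn
      simp only [Finset.mem_range] at hjr
      simp only [Finset.mem_Ico, not_and_or, not_le, not_lt] at hjn
      have hxv : (π.getD j dpart).val = pval π j := rfl
      have hxo : (π.getD j dpart).isOver = pover π j := rfl
      have hxs : (π.getD j dpart).size = psize π j := rfl
      rcases hjn with h | h
      · by_cases h1 : pover π j = true
        · have hnc : ¬ pval π j ≤ pval π c := by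
            intro hle
            have h5 : pval π c ≤ pval π j := hanti j c (by omega)
            exact aux_tie π hop (by omega : c < π.length) hjr (by omega : c ≠ j) h1
              (by omega : pval π c = pval π j)
          simp only [hxv, hxo, hxs]
          simp [h1, hnc]
        · have h1' : pover π j = false := by simpa using h1
          simp only [hxv, hxo, hxs]
          simp [h1']
      · have h2 : pval π j ≤ pval π d := hanti d j h
        have h2' : pval π j ≤ pval π c := le_trans h2 (hanti c d hcd)
        simp only [hxv, hxo, hxs]
        simp [h2, h2']
  -- Step (iii) : Obar difference
  have E3 : Obar η π (pval π (d + m - 1)) = Obar η π (pval π (c + m - 1))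
      + ∑ j ∈ Finset.Ico (c + m) (d + m),
          (if pover π j = true ∧ psize π j % η = 0 then 1 else 0) := by
    unfold Obar
    rw [aux_countP_split π
        (fun p => p.isOver && decide (pval π (d + m - 1) ≤ p.val) && decide (p.size % η = 0))
        (fun p => p.isOver && decide (pval π (c + m - 1) ≤ p.val) && decide (p.size % η = 0))
        (by
          intro x hx hq
          simp only [Bool.and_eq_true, decide_eq_true_eq] at hq ⊢
          exact ⟨⟨hq.1.1, le_trans (hanti (c + m - 1) (d + m - 1) (by omega)) hq.1.2⟩, hq.2⟩)]
    congr 1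
    rw [aux_countP_eq_sum_range]
    rw [← Finset.sum_subset (show Finset.Ico (c + m) (d + m) ⊆ Finset.range π.length by
        intro x hx
        simp only [Finset.mem_Ico] at hx
        simp only [Finset.mem_range]
        omega) ?_]
    · apply Finset.sum_congr rfl
      intro j hj
      simp only [Finset.mem_Ico] at hj
      have hjlen : j < π.length := by omega
      have hxv : (π.getD j dpart).val = pval π j := rfl
      have hxo : (π.getD j dpart).isOver = pover π j := rfl
      have hxs : (π.getD j dpart).size = psize π j := rfl
      by_cases h1 : pover π j = true
      · by_cases h3 : psize π j % η = 0
        · have hle1 : pval π (d + m - 1) ≤ pval π j := hanti j (d + m - 1) (by omega)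
          have hnle : ¬ pval π (c + m - 1) ≤ pval π j := by
            intro hle
            have h4 : pval π j ≤ pval π (c + m - 1) := hanti (c + m - 1) j (by omega)
            exact aux_tie π hop (by omega : c + m - 1 < π.length) hjlen
              (by omega : c + m - 1 ≠ j) h1 (by omega : pval π (c + m - 1) = pval π j)
          simp only [hxv, hxo, hxs]
          simp [h1, h3, hle1, hnle]
        · simp only [hxv, hxo, hxs]
          simp [h1, h3]
      · have h1' : pover π j = false := by simpa using h1
        simp only [hxv, hxo, hxs]
        simp [h1']
    · intro j hjr hjn
      simp only [Finset.mem_range] at hjr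
      simp only [Finset.mem_Ico, not_and_or, not_le, not_lt] at hjn
      have hxv : (π.getD j dpart).val = pval π j := rfl
      have hxo : (π.getD j dpart).isOver = pover π j := rfl
      have hxs : (π.getD j dpart).size = psize π j := rfl
      rcases hjn with h | h
      · have h2 : pval π (c + m - 1) ≤ pval π j := hanti j (c + m - 1) (by omega)
        have h2' : pval π (d + m - 1) ≤ pval π j :=
          le_trans (hanti (c + m - 1) (d + m - 1) (by omega)) h2
        simp only [hxv, hxo, hxs]
        simp [h2, h2']
      · by_cases h1 : pover π j = true
        · have hnd : ¬ pval π (d + m - 1) ≤ pval π j := by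
            intro hle
            have h5 : pval π j ≤ pval π (d + m - 1) := hanti (d + m - 1) j (by omega)
            exact aux_tie π hop (by omega : d + m - 1 < π.length) hjr
              (by omega : d + m - 1 ≠ j) h1 (by omega : pval π (d + m - 1) = pval π j)
          simp only [hxv, hxo, hxs]
          simp [h1, hnd]
        · have h1' : pover π j = false := by simpa using h1
          simp only [hxv, hxo, hxs]
          simp [h1']
  -- Step (iv) : pairwise parity
  have E4pt : ∀ j ∈ Finset.Ico c d,
      (psize π j / η + psize π (j + m) / η
        + (if pover π j = true ∧ ¬ psize π j % η = 0 then 1 else 0)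
        + (if pover π (j + m) = true ∧ psize π (j + m) % η = 0 then 1 else 0)) % 2 = 0 := by
    intro j hj
    simp only [Finset.mem_Ico] at hj
    have hj1 : j < π.length := by omega
    have hj2 : j + m < π.length := by omega
    have hgapj := hgap j (by omega : j + k ≤ π.length)
    rw [show j + k - 1 = j + m by omega] at hgapj
    have hw1 : 2 * ((t - 1) * η) ≤ pval π (j + m) :=
      le_trans hwd (hanti (j + m) (d + m - 1) (by omega))
    have hw2 : pval π j ≤ 2 * ((t + 1) * η) := le_trans (hanti c j hj.1) hwc
    have hval_j : pval π j = 2 * psize π j - (if pover π j then 1 else 0) := rfl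
    have hval_jm : pval π (j + m)
        = 2 * psize π (j + m) - (if pover π (j + m) then 1 else 0) := rfl
    have hda : pover π j = false → psize π j % η = 0 := by
      intro ho
      exact Nat.mod_eq_zero_of_dvd (hdvd _ (aux_getD_mem π j hj1) ho)
    exact aux_pair η (t - 1) (psize π j) (psize π (j + m)) (pover π j) (pover π (j + m)) hη
      (hszpos j hj1) (hszpos (j + m) hj2)
      hda
      (fun ho => Nat.mod_eq_zero_of_dvd (hdvd _ (aux_getD_mem π (j + m) hj2) ho))
      (by rw [← hval_jm]; exact hw1)
      (by rw [← hval_j, show t - 1 + 2 = t + 1 by omega]; exact hw2)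
      (by rw [← hval_j, ← hval_jm]; exact hgapj.1)
      (fun ho => by rw [← hval_j, ← hval_jm]; exact hgapj.2 ho)
  have hshift : ∀ g : ℕ → ℕ,
      ∑ j ∈ Finset.Ico c d, g (j + m) = ∑ j ∈ Finset.Ico (c + m) (d + m), g j := by
    intro g
    rw [Finset.sum_Ico_eq_sum_range, Finset.sum_Ico_eq_sum_range]
    rw [show d + m - (c + m) = d - c by omega]
    exact Finset.sum_congr rfl fun i _ => by rw [show c + m + i = c + i + m by omega]
  have E4 : (∑ j ∈ Finset.Ico c d, (psize π j / η + psize π (j + m) / η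
      + (if pover π j = true ∧ ¬ psize π j % η = 0 then 1 else 0)
      + (if pover π (j + m) = true ∧ psize π (j + m) % η = 0 then 1 else 0))) % 2 = 0 := by
    rw [Finset.sum_nat_mod]
    rw [Finset.sum_congr rfl E4pt]
    simp
  have E5 : ∑ j ∈ Finset.Ico c d, (psize π j / η + psize π (j + m) / η
      + (if pover π j = true ∧ ¬ psize π j % η = 0 then 1 else 0)
      + (if pover π (j + m) = true ∧ psize π (j + m) % η = 0 then 1 else 0))
    = (∑ j ∈ Finset.Ico c d, psize π j / η)
      + (∑ j ∈ Finset.Ico (c + m) (d + m), psize π j / η)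
      + (∑ j ∈ Finset.Ico c d, (if pover π j = true ∧ ¬ psize π j % η = 0 then 1 else 0))
      + (∑ j ∈ Finset.Ico (c + m) (d + m),
          (if pover π j = true ∧ psize π j % η = 0 then 1 else 0)) := by
    rw [← hshift (fun j => psize π j / η),
        ← hshift (fun j => if pover π j = true ∧ psize π j % η = 0 then 1 else 0),
        ← Finset.sum_add_distrib, ← Finset.sum_add_distrib, ← Finset.sum_add_distrib]
  rw [E5] at E4
  omega

end Stmt5Aux

theorem stmt_5 (α : ℕ → ℕ) (lam η k r : ℕ)
    (hη : 0 < η)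
    (hαpos : ∀ i, 1 ≤ i → i ≤ lam → 0 < α i ∧ α i < η)
    (hαmono : ∀ i j, 1 ≤ i → i < j → j ≤ lam → α i < α j)
    (hαsym : ∀ i, 1 ≤ i → i ≤ lam → α i = η - α (lam + 1 - i))
    (hrk : r < k) (hlr : lam ≤ r) (hlk : lam + 1 < k)
    (π : List OPart) (hπ : InBbar α lam η k r π)
    (t : ℕ) (ht : 1 ≤ t) (c d : ℕ)
    (hc : BandInC η t π (k - 1) c) (hd : BandInC η t π (k - 1) d) :
    EvenBand η r π (k - 1) c ↔ EvenBand η r π (k - 1) d := by 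
  have hk2 : 2 ≤ k := by omega
  obtain ⟨hop, hcong, hdvd, hgap, hfle⟩ := hπ
  rcases le_total c d with hcd | hcd
  · have hkey := aux_key η k r π hop hdvd hgap hη hk2 t ht c d hcd hc hd
    unfold EvenBand Int.ModEq
    omega
  · have hkey := aux_key η k r π hop hdvd hgap hη hk2 t ht d c hcd hd hc
    unfold EvenBand Int.ModEq
    omega
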